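/- arXiv:2506.08273 — 2 statements merged into one kernel-verified Lean document; each statement's English description precedes it below -/
import Mathlib

section
/- Let 0 < s, p < ∞ with sp > d. Then there exists a constant c = c(d, s, p) < ∞ such that for every function u : ℤ^d → ℂ with u(0) = 0, one has ∑_{j ∈ ℤ^d \ {0}} |u(j)|^p / ‖j‖_∞^{sp} ≤ c · ∑_{j ∈ ℤ^d} ∑_{m ∈ ℤ^d, m ≠ j} |u(j) − u(m)|^p / ‖j − m‖_∞^{sp+d}. -/
open scoped ENNReal

/-- The sup-norm `‖x‖_∞` of a point of `ℤ^d`, as a real number. -/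
noncomputable def zsup {d : ℕ} (x : Fin d → ℤ) : ℝ :=
  ((Finset.univ.sup fun i => (x i).natAbs : ℕ) : ℝ)

open Finset

namespace FH
variable {d : ℕ}

def nsup (x : Fin d → ℤ) : ℕ := Finset.univ.sup fun i => (x i).natAbs

lemma zsup_eq (x : Fin d → ℤ) : zsup x = (nsup x : ℝ) := rfl

lemma nsup_le_iff {x : Fin d → ℤ} {r : ℕ} : nsup x ≤ r ↔ ∀ i, (x i).natAbs ≤ r := by
  simp [nsup, Finset.sup_le_iff]

lemma le_nsup (x : Fin d → ℤ) (i : Fin d) : (x i).natAbs ≤ nsup x :=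
  Finset.le_sup (f := fun i => (x i).natAbs) (Finset.mem_univ i)

lemma nsup_eq_zero_iff {x : Fin d → ℤ} : nsup x = 0 ↔ x = 0 := by
  constructor
  · intro h
    funext i
    have := le_nsup x i
    rw [h, Nat.le_zero, Int.natAbs_eq_zero] at this
    exact this
  · rintro rfl
    simp [nsup]

lemma nsup_sub_le (a b : Fin d → ℤ) : nsup (a - b) ≤ nsup a + nsup b := by
  apply Finset.sup_le
  intro i _
  calc ((a - b) i).natAbs = (a i - b i).natAbs := by simp
  _ ≤ (a i).natAbs + (b i).natAbs := Int.natAbs_sub_le _ _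
  _ ≤ nsup a + nsup b := add_le_add (le_nsup a i) (le_nsup b i)

noncomputable def latB (d r : ℕ) : Finset (Fin d → ℤ) := Fintype.piFinset fun _ => Finset.Icc (-(r:ℤ)) r

lemma mem_latB {r : ℕ} {x : Fin d → ℤ} : x ∈ latB d r ↔ nsup x ≤ r := by
  rw [latB, Fintype.mem_piFinset, nsup_le_iff]
  apply forall_congr'
  intro i
  rw [Finset.mem_Icc]
  omega

lemma card_latB (d r : ℕ) : (latB d r).card = (2*r+1)^d := by
  rw [latB, Fintype.card_piFinset]
  have : (Finset.Icc (-(r:ℤ)) r).card = 2*r+1 := by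
    rw [Int.card_Icc]; omega
  simp [this]

lemma latB_mono {r r' : ℕ} (h : r ≤ r') : latB d r ⊆ latB d r' := by
  intro x hx
  rw [mem_latB] at *
  omega


lemma rpow_add_le {a b q : ℝ} (ha : 0 ≤ a) (hb : 0 ≤ b) (hq : 0 ≤ q) :
    (a + b) ^ q ≤ 2 ^ q * (a ^ q + b ^ q) := by
  have hm : 0 ≤ max a b := le_trans ha (le_max_left a b)
  have h1 : a + b ≤ 2 * max a b := by
    rcases max_cases a b with ⟨h, h'⟩ | ⟨h, h'⟩ <;> rw [h] <;> linarith
  calc (a + b) ^ q ≤ (2 * max a b) ^ q :=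
        Real.rpow_le_rpow (by linarith) h1 hq
  _ = 2 ^ q * (max a b) ^ q := Real.mul_rpow (by norm_num) hm
  _ ≤ 2 ^ q * (a ^ q + b ^ q) := by
      apply mul_le_mul_of_nonneg_left _ (Real.rpow_nonneg (by norm_num) q)
      rcases max_cases a b with ⟨h, h'⟩ | ⟨h, h'⟩ <;> rw [h]
      · nlinarith [Real.rpow_nonneg hb q]
      · nlinarith [Real.rpow_nonneg ha q]

lemma one_add_le_rpow {x a : ℝ} (hx : 0 < x) (ha : 0 ≤ a) :
    1 + a / (x + 1) ≤ (1 + 1/x) ^ a := by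
  have hb : (0:ℝ) < 1 + 1/x := by positivity
  have hlog : 1 / (x+1) ≤ Real.log (1 + 1/x) := by
    have h1 : Real.log (1 + 1/x)⁻¹ ≤ (1 + 1/x)⁻¹ - 1 :=
      Real.log_le_sub_one_of_pos (by positivity)
    rw [Real.log_inv] at h1
    have h2 : (1 + 1/x)⁻¹ = x / (x + 1) := by
      field_simp
    rw [h2] at h1
    have : 1 - x / (x+1) = 1/(x+1) := by field_simp; ring
    linarith
  calc 1 + a / (x+1) ≤ 1 + a * Real.log (1 + 1/x) := by
        have := mul_le_mul_of_nonneg_left hlog ha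
        rw [mul_one_div] at this
        linarith
  _ ≤ Real.exp (a * Real.log (1 + 1/x)) := by
        have := Real.add_one_le_exp (a * Real.log (1 + 1/x))
        linarith
  _ = (1 + 1/x) ^ a := by
        rw [Real.rpow_def_of_pos hb, mul_comm]

lemma inv_rpow_step {a x : ℝ} (ha : 0 < a) (hx : 1 ≤ x) :
    a * (((x+1)) ^ (a+1))⁻¹ ≤ (x ^ a)⁻¹ - ((x+1) ^ a)⁻¹ := by
  have hx0 : (0:ℝ) < x := by linarith
  have hy0 : (0:ℝ) < x + 1 := by linarith
  have hxa : (0:ℝ) < x ^ a := Real.rpow_pos_of_pos hx0 a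
  have hya : (0:ℝ) < (x+1) ^ a := Real.rpow_pos_of_pos hy0 a
  have hya1 : (0:ℝ) < (x+1) ^ (a+1) := Real.rpow_pos_of_pos hy0 (a+1)
  have key : 1 + a / (x + 1) ≤ (x+1) ^ a / x ^ a := by
    have h1 := one_add_le_rpow hx0 ha.le
    have h2 : (1 + 1/x) ^ a = (x+1) ^ a / x ^ a := by
      rw [← Real.div_rpow hy0.le hx0.le]
      congr 1
      field_simp
    linarith [h2 ▸ h1]
  -- multiply by x^a / (x+1)^a etc.
  have hkey2 : (1 + a/(x+1)) * x ^ a ≤ (x+1) ^ a := (le_div_iff₀ hxa).mp key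
  have hkey3 : x ^ a * (x+1) + a * x ^ a ≤ (x+1) ^ a * (x+1) := by
    have h := mul_le_mul_of_nonneg_right hkey2 hy0.le
    have e : (1 + a/(x+1)) * x ^ a * (x+1) = x ^ a * (x+1) + a * x ^ a := by
      field_simp
    linarith [e ▸ h]
  have hsplit : (x+1) ^ (a+1) = (x+1) ^ a * (x+1) := by
    rw [Real.rpow_add hy0, Real.rpow_one]
  rw [hsplit]
  have e1 : (x ^ a)⁻¹ - ((x+1) ^ a)⁻¹ = ((x+1) ^ a - x ^ a) / (x ^ a * (x+1) ^ a) := by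
    field_simp
  have e2 : a * ((x+1) ^ a * (x+1))⁻¹ = a / ((x+1) ^ a * (x+1)) := by
    rw [div_eq_mul_inv]
  rw [e1, e2, div_le_div_iff₀ (by positivity) (by positivity)]
  nlinarith [hkey3, hxa, hya, hy0]


lemma tail_sum {a : ℝ} (ha : 0 < a) {N₀ : ℕ} (h1 : 1 ≤ N₀) (N : ℕ) :
    ∑ n ∈ Icc N₀ N, (((n:ℝ)) ^ (a+1))⁻¹ ≤ (1 + 1/a) * (((N₀:ℝ)) ^ a)⁻¹ := by
  rcases lt_or_ge N N₀ with hN | hN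
  · rw [Finset.Icc_eq_empty (by omega)]
    simp only [Finset.sum_empty]
    positivity
  · have key : ∀ M, N₀ ≤ M → ∑ n ∈ Icc N₀ M, (((n:ℝ)) ^ (a+1))⁻¹ ≤
        (((N₀:ℝ)) ^ (a+1))⁻¹ + (1/a) * ((((N₀:ℝ)) ^ a)⁻¹ - (((M:ℝ)) ^ a)⁻¹) := by
      intro M hM
      induction M, hM using Nat.le_induction with
      | base =>
          rw [Finset.Icc_self, Finset.sum_singleton]
          simp
      | succ M hM ih =>
          rw [Finset.sum_Icc_succ_top (by omega)]
          have hstep : ((((M:ℝ)+1)) ^ (a+1))⁻¹ ≤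
              (1/a) * ((((M:ℝ)) ^ a)⁻¹ - ((((M:ℝ)+1)) ^ a)⁻¹) := by
            have hM1 : (1:ℝ) ≤ (M:ℝ) := by exact_mod_cast le_trans h1 hM
            have h0 := inv_rpow_step ha hM1
            calc ((((M:ℝ)+1)) ^ (a+1))⁻¹ = (1/a) * (a * ((((M:ℝ)+1)) ^ (a+1))⁻¹) := by
                  field_simp
            _ ≤ (1/a) * ((((M:ℝ)) ^ a)⁻¹ - ((((M:ℝ)+1)) ^ a)⁻¹) :=
                  mul_le_mul_of_nonneg_left h0 (by positivity)
          have hcast : ((M:ℕ)+1 : ℝ) = (M:ℝ)+1 := by push_cast; ring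
          push_cast
          linarith [ih]
    have hMa : (0:ℝ) ≤ (((N:ℝ)) ^ a)⁻¹ := by positivity
    have h2 : (((N₀:ℝ)) ^ (a+1))⁻¹ ≤ (((N₀:ℝ)) ^ a)⁻¹ := by
      have hN₀1 : (1:ℝ) ≤ (N₀:ℝ) := by exact_mod_cast h1
      apply inv_anti₀ (by positivity)
      apply Real.rpow_le_rpow_of_exponent_le hN₀1
      linarith
    have := key N hN
    have ha' : (0:ℝ) ≤ 1/a := by positivity
    nlinarith [this, h2, mul_nonneg ha' hMa]

lemma pow_sub_pow_le {a b : ℝ} (hb : 0 ≤ b) (hab : b ≤ a) (k : ℕ) :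
    a ^ k - b ^ k ≤ k * (a - b) * a ^ (k-1) := by
  have h := geom_sum₂_mul a b k
  rw [← h]
  have hbound : (∑ i ∈ range k, a ^ i * b ^ (k - 1 - i)) ≤ k * a ^ (k-1) := by
    calc (∑ i ∈ range k, a ^ i * b ^ (k - 1 - i)) ≤ ∑ i ∈ range k, a ^ (k-1) := by
          apply Finset.sum_le_sum
          intro i hi
          rw [Finset.mem_range] at hi
          calc a ^ i * b ^ (k - 1 - i) ≤ a ^ i * a ^ (k - 1 - i) := by
                exact mul_le_mul_of_nonneg_left (pow_le_pow_left₀ hb hab _)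
                  (pow_nonneg (le_trans hb hab) i)
          _ = a ^ (i + (k - 1 - i)) := (pow_add a i _).symm
          _ = a ^ (k-1) := by congr 1; omega
    _ = k * a ^ (k-1) := by rw [Finset.sum_const, Finset.card_range, nsmul_eq_mul]
  have hak : 0 ≤ a - b := by linarith
  calc (∑ i ∈ range k, a ^ i * b ^ (k - 1 - i)) * (a - b)
      ≤ (k * a ^ (k-1)) * (a - b) := by
        apply mul_le_mul_of_nonneg_right hbound hak
  _ = k * (a - b) * a ^ (k-1) := by ring

-- n < K * (n/K + 1), hence n ≤ K * (2*(n/K)+1)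
lemma n_le_K_mul {n K : ℕ} (hK : 1 ≤ K) : n ≤ K * (2*(n/K)+1) := by
  have h1 : K * (n/K) + n % K = n := Nat.div_add_mod n K
  have h2 : n % K < K := Nat.mod_lt n (by omega)
  have h3 : K*(2*(n/K)+1) = K*(n/K) + (K*(n/K) + K) := by ring
  omega

lemma KI (d : ℕ) (σ : ℝ) (hσ0 : 0 < σ) (K : ℕ) (hK : 1 ≤ K)
    {j m : Fin d → ℤ} (hj : j ≠ 0) (hm : nsup m ≤ nsup j / K) :
    ((nsup (j - m) : ℝ)) ^ (σ + (d:ℝ)) ≤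
      2 ^ (σ + (d:ℝ)) * (K:ℝ) ^ (d:ℝ) *
        ((nsup j : ℝ) ^ σ * (((latB d (nsup j / K)).card : ℝ))) := by
  set n := nsup j with hn
  set r := n / K with hr
  have hn1 : 1 ≤ n :=
    Nat.one_le_iff_ne_zero.mpr (fun h => hj (nsup_eq_zero_iff.mp (by rw [← hn, h])))
  have hrn : r ≤ n := Nat.div_le_self n K
  have h2n : nsup (j - m) ≤ 2 * n := le_trans (nsup_sub_le j m) (by omega)
  have hexp : (0:ℝ) ≤ σ + (d:ℝ) := by positivity
  have hnpos : (0:ℝ) < (n:ℝ) := by exact_mod_cast hn1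
  calc ((nsup (j - m) : ℝ)) ^ (σ + (d:ℝ)) ≤ ((2*n : ℕ) : ℝ) ^ (σ + (d:ℝ)) := by
        apply Real.rpow_le_rpow (by positivity) (by exact_mod_cast h2n) hexp
  _ = (2:ℝ) ^ (σ + (d:ℝ)) * ((n:ℝ)) ^ (σ + (d:ℝ)) := by
        push_cast
        rw [Real.mul_rpow (by norm_num) (by positivity)]
  _ = 2 ^ (σ + (d:ℝ)) * ((n:ℝ) ^ σ * (n:ℝ) ^ (d:ℕ)) := by
        rw [Real.rpow_add hnpos, Real.rpow_natCast]
  _ ≤ 2 ^ (σ + (d:ℝ)) * ((n:ℝ) ^ σ * ((K:ℝ) ^ (d:ℕ) * ((2*r+1 : ℕ):ℝ) ^ (d:ℕ))) := by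
        have hKle : (n:ℝ) ^ (d:ℕ) ≤ (K:ℝ) ^ (d:ℕ) * ((2*r+1 : ℕ):ℝ) ^ (d:ℕ) := by
          calc (n:ℝ) ^ (d:ℕ) ≤ ((K * (2*r+1) : ℕ):ℝ) ^ (d:ℕ) := by
                apply pow_le_pow_left₀ (by positivity)
                exact_mod_cast n_le_K_mul hK
          _ = (K:ℝ) ^ (d:ℕ) * ((2*r+1 : ℕ):ℝ) ^ (d:ℕ) := by push_cast; rw [mul_pow]
        have h3 : (0:ℝ) ≤ (n:ℝ) ^ σ := by positivity
        have h2 : (0:ℝ) ≤ (2:ℝ) ^ (σ + (d:ℝ)) := by positivity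
        exact mul_le_mul_of_nonneg_left (mul_le_mul_of_nonneg_left hKle h3) h2
  _ = 2 ^ (σ + (d:ℝ)) * (K:ℝ) ^ (d:ℝ) * ((n:ℝ) ^ σ * (((latB d r).card : ℝ))) := by
        rw [card_latB, Real.rpow_natCast]
        push_cast
        ring


lemma claimC (d : ℕ) (hd : 0 < d) (σ : ℝ) (hσ : (d:ℝ) < σ) (K : ℕ) (hK2 : 2 ≤ K)
    (N q : ℕ) (hq : 1 ≤ q) :
    ∑ j ∈ ((latB d N).erase 0).filter (fun j => q * K ≤ nsup j),
        (((nsup j : ℝ)) ^ σ * (((latB d (nsup j / K)).card : ℝ)))⁻¹ ≤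
      (2*(d:ℝ)*3^(d-1) * (1 + 1/σ) * (K:ℝ)^((d:ℝ)-σ)) * (((q:ℝ)) ^ σ)⁻¹ := by
  have hσ0 : (0:ℝ) < σ := lt_of_le_of_lt (by exact_mod_cast Nat.zero_le d) hσ
  set s := ((latB d N).erase 0).filter (fun j => q * K ≤ nsup j) with hs
  set g : (Fin d → ℤ) → ℝ :=
    fun j => (((nsup j : ℝ)) ^ σ * (((latB d (nsup j / K)).card : ℝ)))⁻¹ with hg
  have hmaps : ∀ j ∈ s, nsup j ∈ Finset.Icc (q*K) N := by
    intro j hj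
    rw [hs, Finset.mem_filter, Finset.mem_erase] at hj
    rw [Finset.mem_Icc]
    exact ⟨hj.2, mem_latB.mp hj.1.2⟩
  rw [← Finset.sum_fiberwise_of_maps_to hmaps g]
  set C : ℝ := 2*(d:ℝ)*3^(d-1) * (K:ℝ)^(d:ℕ) with hC
  have hC0 : 0 ≤ C := by positivity
  have hper : ∀ n ∈ Finset.Icc (q*K) N,
      (∑ j ∈ s.filter (fun j => nsup j = n), g j) ≤ C * (((n:ℝ)) ^ (σ+1))⁻¹ := by
    intro n hn
    rw [Finset.mem_Icc] at hn
    have hqK : 1 ≤ q*K := by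
      have := Nat.mul_le_mul hq (show 1 ≤ K by omega)
      simpa using this
    have hn1 : 1 ≤ n := le_trans hqK hn.1
    have hn1R : (1:ℝ) ≤ (n:ℝ) := by exact_mod_cast hn1
    have hnpos : (0:ℝ) < (n:ℝ) := by exact_mod_cast hn1
    -- constant value on the fiber
    set w : ℝ := (((n:ℝ)) ^ σ * (((latB d (n/K)).card : ℝ)))⁻¹ with hw
    have hw0 : 0 ≤ w := by positivity
    have hfibconst : ∀ j ∈ s.filter (fun j => nsup j = n), g j = w := by
      intro j hj
      rw [Finset.mem_filter] at hj
      rw [hg]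
      simp only [hj.2, hw]
    have hsum : (∑ j ∈ s.filter (fun j => nsup j = n), g j)
        = ((s.filter (fun j => nsup j = n)).card : ℝ) * w := by
      rw [Finset.sum_congr rfl hfibconst, Finset.sum_const, nsmul_eq_mul]
    rw [hsum]
    -- cardinality bound
    have hsub : s.filter (fun j => nsup j = n) ⊆ latB d n \ latB d (n-1) := by
      intro j hj
      rw [Finset.mem_filter] at hj
      rw [Finset.mem_sdiff, mem_latB, mem_latB, hj.2]
      omega
    have hcard1 : (s.filter (fun j => nsup j = n)).card ≤ (2*n+1)^d - (2*(n-1)+1)^d := by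
      calc (s.filter (fun j => nsup j = n)).card ≤ (latB d n \ latB d (n-1)).card :=
            Finset.card_le_card hsub
      _ = (latB d n).card - (latB d (n-1)).card :=
            Finset.card_sdiff_of_subset (latB_mono (by omega))
      _ = (2*n+1)^d - (2*(n-1)+1)^d := by rw [card_latB, card_latB]
    have hcastsub : (((2*n+1)^d - (2*(n-1)+1)^d : ℕ) : ℝ)
        = ((2*(n:ℝ)+1))^d - ((2*(n:ℝ)-1))^d := by
      rw [Nat.cast_sub (Nat.pow_le_pow_left (by omega) d)]
      push_cast [Nat.cast_sub hn1]
      ring_nf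
    have hcardR : ((s.filter (fun j => nsup j = n)).card : ℝ)
        ≤ 2*(d:ℝ)*3^(d-1) * ((n:ℝ))^(d-1) := by
      calc ((s.filter (fun j => nsup j = n)).card : ℝ)
          ≤ (((2*n+1)^d - (2*(n-1)+1)^d : ℕ) : ℝ) := by exact_mod_cast hcard1
      _ = ((2*(n:ℝ)+1))^d - ((2*(n:ℝ)-1))^d := hcastsub
      _ ≤ (d:ℝ) * ((2*(n:ℝ)+1) - (2*(n:ℝ)-1)) * (2*(n:ℝ)+1)^(d-1) :=
            pow_sub_pow_le (by linarith) (by linarith) d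
      _ = 2*(d:ℝ) * (2*(n:ℝ)+1)^(d-1) := by ring
      _ ≤ 2*(d:ℝ) * (3*(n:ℝ))^(d-1) := by
            apply mul_le_mul_of_nonneg_left _ (by positivity)
            apply pow_le_pow_left₀ (by linarith)
            linarith
      _ = 2*(d:ℝ)*3^(d-1) * ((n:ℝ))^(d-1) := by rw [mul_pow]; ring
    -- bound on w
    have hKd : ((n:ℝ))^(d:ℕ) ≤ (K:ℝ)^(d:ℕ) * (((latB d (n/K)).card : ℝ)) := by
      rw [card_latB]
      calc ((n:ℝ))^(d:ℕ) ≤ ((K * (2*(n/K)+1) : ℕ):ℝ)^(d:ℕ) := by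
            apply pow_le_pow_left₀ (by positivity)
            exact_mod_cast n_le_K_mul (by omega)
      _ = (K:ℝ)^(d:ℕ) * (((2*(n/K)+1)^d : ℕ):ℝ) := by push_cast; rw [mul_pow]
    have hcardpos : (0:ℝ) < (((latB d (n/K)).card : ℝ)) := by
      rw [card_latB]
      positivity
    have hwle : w ≤ (K:ℝ)^(d:ℕ) * (((n:ℝ))^σ * ((n:ℝ))^(d:ℕ))⁻¹ := by
      have hA : (0:ℝ) < (n:ℝ)^σ * (((latB d (n/K)).card : ℝ)) :=
        mul_pos (Real.rpow_pos_of_pos hnpos σ) hcardpos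
      have hB : (0:ℝ) < (n:ℝ)^σ * ((n:ℝ))^(d:ℕ) := by positivity
      have hrepr : (K:ℝ)^(d:ℕ) * (((n:ℝ))^σ * ((n:ℝ))^(d:ℕ))⁻¹
          = (K:ℝ)^(d:ℕ) / (((n:ℝ))^σ * ((n:ℝ))^(d:ℕ)) := (div_eq_mul_inv _ _).symm
      rw [hw, inv_eq_one_div, hrepr, div_le_div_iff₀ hA hB]
      calc 1 * (((n:ℝ))^σ * ((n:ℝ))^(d:ℕ)) = ((n:ℝ))^σ * ((n:ℝ))^(d:ℕ) := one_mul _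
      _ ≤ ((n:ℝ))^σ * ((K:ℝ)^(d:ℕ) * (((latB d (n/K)).card : ℝ))) :=
          mul_le_mul_of_nonneg_left hKd (Real.rpow_nonneg hnpos.le σ)
      _ = (K:ℝ)^(d:ℕ) * (((n:ℝ))^σ * (((latB d (n/K)).card : ℝ))) := by ring
    -- combine
    have e : ((n:ℝ))^(d-1) * (((n:ℝ))^σ * ((n:ℝ))^(d:ℕ))⁻¹ = (((n:ℝ))^(σ+1))⁻¹ := by
      have e1 : ((n:ℝ))^(d:ℕ) = ((n:ℝ))^(d-1) * (n:ℝ) := by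
        rw [← pow_succ]
        congr 1
        omega
      have e2 : ((n:ℝ))^σ * (n:ℝ) = ((n:ℝ))^(σ+1) := (Real.rpow_add_one (ne_of_gt hnpos) σ).symm
      rw [e1, show ((n:ℝ))^σ * (((n:ℝ))^(d-1) * (n:ℝ)) = (((n:ℝ))^σ * (n:ℝ)) * ((n:ℝ))^(d-1) from by ring, e2]
      rw [mul_inv]
      have hpd1 : ((n:ℝ))^(d-1) ≠ 0 := by positivity
      field_simp
    calc ((s.filter (fun j => nsup j = n)).card : ℝ) * w
        ≤ (2*(d:ℝ)*3^(d-1) * ((n:ℝ))^(d-1)) * ((K:ℝ)^(d:ℕ) * (((n:ℝ))^σ * ((n:ℝ))^(d:ℕ))⁻¹) := by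
          apply mul_le_mul hcardR hwle hw0 (by positivity)
    _ = C * (((n:ℝ))^(d-1) * (((n:ℝ))^σ * ((n:ℝ))^(d:ℕ))⁻¹) := by rw [hC]; ring
    _ = C * (((n:ℝ)) ^ (σ+1))⁻¹ := by rw [e]
  calc (∑ n ∈ Finset.Icc (q*K) N, ∑ j ∈ s.filter (fun j => nsup j = n), g j)
      ≤ ∑ n ∈ Finset.Icc (q*K) N, C * (((n:ℝ)) ^ (σ+1))⁻¹ := Finset.sum_le_sum hper
  _ = C * ∑ n ∈ Finset.Icc (q*K) N, (((n:ℝ)) ^ (σ+1))⁻¹ := by rw [Finset.mul_sum]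
  _ ≤ C * ((1 + 1/σ) * ((((q*K : ℕ):ℝ)) ^ σ)⁻¹) := by
        apply mul_le_mul_of_nonneg_left _ hC0
        exact tail_sum hσ0 (by
          have := Nat.mul_le_mul hq (show 1 ≤ K by omega)
          simpa using this) N
  _ = (2*(d:ℝ)*3^(d-1) * (1 + 1/σ) * (K:ℝ)^((d:ℝ)-σ)) * (((q:ℝ)) ^ σ)⁻¹ := by
        have hKpos : (0:ℝ) < (K:ℝ) := by
          have : (0:ℕ) < K := by omega
          exact_mod_cast this
        have e1 : (((q*K : ℕ)):ℝ)^σ = ((q:ℝ))^σ * ((K:ℝ))^σ := by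
          push_cast
          rw [Real.mul_rpow (by positivity) (by positivity)]
        have e2 : (K:ℝ)^(d:ℕ) * (((K:ℝ))^σ)⁻¹ = (K:ℝ)^((d:ℝ)-σ) := by
          rw [← Real.rpow_natCast (K:ℝ) d, ← Real.rpow_neg hKpos.le, ← Real.rpow_add hKpos]
          ring_nf
        calc C * ((1 + 1/σ) * ((((q*K : ℕ):ℝ)) ^ σ)⁻¹)
            = (2*(d:ℝ)*3^(d-1) * (1 + 1/σ) * ((K:ℝ)^(d:ℕ) * (((K:ℝ))^σ)⁻¹)) * (((q:ℝ))^σ)⁻¹ := by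
              rw [hC, e1, mul_inv]
              ring
        _ = (2*(d:ℝ)*3^(d-1) * (1 + 1/σ) * (K:ℝ)^((d:ℝ)-σ)) * (((q:ℝ)) ^ σ)⁻¹ := by rw [e2]

lemma SN_le (d : ℕ) (hd : 0 < d) (p σ : ℝ) (hp : 0 < p) (hσ : (d:ℝ) < σ)
    (K : ℕ) (hK2 : 2 ≤ K)
    (hKabs : 2^p * (2*(d:ℝ)*3^(d-1) * (1 + 1/σ) * (K:ℝ)^((d:ℝ)-σ)) ≤ 1/2)
    (u : (Fin d → ℤ) → ℂ) (hu : u 0 = 0)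
    (R : ℝ)
    (hR : ∀ (F : Finset (Fin d → ℤ)) (Q : (Fin d → ℤ) → Finset (Fin d → ℤ)),
      (∀ j ∈ F, ∀ m ∈ Q j, m ≠ j) →
      ∑ j ∈ F, ∑ m ∈ Q j,
        ‖u j - u m‖ ^ p / (nsup (j - m) : ℝ) ^ (σ + (d:ℝ)) ≤ R)
    (N : ℕ) :
    ∑ j ∈ (latB d N).erase 0, ‖u j‖ ^ p / (nsup j : ℝ) ^ σ ≤
      2 * (2 ^ (p + (σ + (d:ℝ))) * (K:ℝ) ^ (d:ℝ)) * R := by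
  have hσ0 : (0:ℝ) < σ := lt_of_le_of_lt (by exact_mod_cast Nat.zero_le d) hσ
  have hR0 : 0 ≤ R := by
    have := hR ∅ (fun _ => ∅) (by simp)
    simpa using this
  set F := (latB d N).erase 0 with hF
  set Q : (Fin d → ℤ) → Finset (Fin d → ℤ) := fun j => latB d (nsup j / K) with hQ
  set Dq : (Fin d → ℤ) → ℝ := fun j => (nsup j : ℝ) ^ σ * (((Q j).card : ℝ)) with hD
  set S := ∑ j ∈ F, ‖u j‖ ^ p / (nsup j : ℝ) ^ σ with hS
  -- basic facts for j ∈ F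
  have hFj : ∀ j ∈ F, j ≠ 0 ∧ nsup j ≤ N ∧ 1 ≤ nsup j := by
    intro j hj
    rw [hF, Finset.mem_erase, mem_latB] at hj
    refine ⟨hj.1, hj.2, ?_⟩
    rcases Nat.eq_zero_or_pos (nsup j) with h | h
    · exact absurd (nsup_eq_zero_iff.mp h) hj.1
    · exact h
  have hQcard : ∀ j : Fin d → ℤ, (0:ℝ) < ((Q j).card : ℝ) := by
    intro j
    rw [hQ]
    simp only [card_latB]
    positivity
  have hDpos : ∀ j ∈ F, (0:ℝ) < Dq j := by
    intro j hj
    have h1 : (0:ℝ) < ((nsup j : ℝ)) ^ σ := by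
      have := (hFj j hj).2.2
      have : (0:ℝ) < (nsup j : ℝ) := by exact_mod_cast this
      positivity
    exact mul_pos h1 (hQcard j)
  -- m ∈ Q j implies m ≠ j (for j ∈ F)
  have hQne : ∀ j ∈ F, ∀ m ∈ Q j, m ≠ j := by
    intro j hj m hm
    rw [hQ, mem_latB] at hm
    intro h
    subst h
    have h1 := (hFj m hj).2.2
    have h2 : nsup m / K ≤ nsup m / 2 := Nat.div_le_div_left hK2 (by omega)
    have h3 : nsup m / 2 < nsup m := Nat.div_lt_self (by omega) (by omega)
    omega
  -- Step 1 : pointwise averaging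
  have step1 : S ≤ ∑ j ∈ F, ∑ m ∈ Q j,
      (2^p * (‖u j - u m‖ ^ p + ‖u m‖ ^ p)) / Dq j := by
    apply Finset.sum_le_sum
    intro j hj
    have hcne : ((Q j).card : ℝ) ≠ 0 := (hQcard j).ne'
    have hnσ : (0:ℝ) < ((nsup j : ℝ)) ^ σ := by
      have h1 : (0:ℝ) < (nsup j : ℝ) := by exact_mod_cast (hFj j hj).2.2
      positivity
    have hconst : ‖u j‖ ^ p / (nsup j : ℝ) ^ σ
        = ∑ m ∈ Q j, ‖u j‖ ^ p / Dq j := by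
      rw [Finset.sum_const, nsmul_eq_mul]
      simp only [hD]
      rw [div_mul_eq_div_div]
      field_simp
    rw [hconst]
    apply Finset.sum_le_sum
    intro m hm
    have hnum : ‖u j‖ ^ p
        ≤ 2^p * (‖u j - u m‖ ^ p + ‖u m‖ ^ p) := by
      have habs : ‖u j‖ ≤ ‖u j - u m‖ + ‖u m‖ := by
        calc ‖u j‖ = ‖(u j - u m) + u m‖ := by congr 1; ring
        _ ≤ _ := norm_add_le _ _
      calc ‖u j‖ ^ p
          ≤ (‖u j - u m‖ + ‖u m‖) ^ p :=
            Real.rpow_le_rpow (norm_nonneg _) habs hp.le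
      _ ≤ _ := rpow_add_le (norm_nonneg _) (norm_nonneg _) hp.le
    exact div_le_div_of_nonneg_right hnum (hDpos j hj).le
  -- split
  have split : (∑ j ∈ F, ∑ m ∈ Q j,
        (2^p * (‖u j - u m‖ ^ p + ‖u m‖ ^ p)) / Dq j)
      = (∑ j ∈ F, ∑ m ∈ Q j, (2^p * ‖u j - u m‖ ^ p) / Dq j)
        + (∑ j ∈ F, ∑ m ∈ Q j, (2^p * ‖u m‖ ^ p) / Dq j) := by
    rw [← Finset.sum_add_distrib]
    apply Finset.sum_congr rfl
    intro j _
    rw [← Finset.sum_add_distrib]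
    apply Finset.sum_congr rfl
    intro m _
    rw [mul_add, add_div]
  -- Term 1
  have hT1 : (∑ j ∈ F, ∑ m ∈ Q j, (2^p * ‖u j - u m‖ ^ p) / Dq j)
      ≤ (2 ^ (p + (σ + (d:ℝ))) * (K:ℝ) ^ (d:ℝ)) * R := by
    have hconstpos : (0:ℝ) < 2 ^ (p + (σ + (d:ℝ))) * (K:ℝ) ^ (d:ℝ) := by
      have : (0:ℝ) < (K:ℝ) := by exact_mod_cast (show 0 < K by omega)
      positivity
    have h2split : (2:ℝ) ^ (p + (σ + (d:ℝ))) = 2 ^ p * 2 ^ (σ + (d:ℝ)) :=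
      Real.rpow_add (by norm_num) p _
    calc (∑ j ∈ F, ∑ m ∈ Q j, (2^p * ‖u j - u m‖ ^ p) / Dq j)
        ≤ ∑ j ∈ F, ∑ m ∈ Q j, (2 ^ (p + (σ + (d:ℝ))) * (K:ℝ) ^ (d:ℝ)) *
            (‖u j - u m‖ ^ p / (nsup (j - m) : ℝ) ^ (σ + (d:ℝ))) := by
          apply Finset.sum_le_sum
          intro j hj
          apply Finset.sum_le_sum
          intro m hm
          have hmQ : nsup m ≤ nsup j / K := by
            have := hm
            rw [hQ] at this
            exact mem_latB.mp this
          have hki := KI d σ hσ0 K (by omega) (hFj j hj).1 hmQ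
          have hjm0 : j - m ≠ 0 := sub_ne_zero.mpr (Ne.symm (hQne j hj m hm))
          have hjm1 : 1 ≤ nsup (j - m) := by
            rcases Nat.eq_zero_or_pos (nsup (j-m)) with h | h
            · exact absurd (nsup_eq_zero_iff.mp h) hjm0
            · exact h
          have hX : (0:ℝ) < ((nsup (j - m) : ℝ)) ^ (σ + (d:ℝ)) := by
            have : (0:ℝ) < ((nsup (j-m)) : ℝ) := by exact_mod_cast hjm1
            positivity
          have hDp := hDpos j hj
          have ha : (0:ℝ) ≤ ‖u j - u m‖ ^ p :=
            Real.rpow_nonneg (norm_nonneg _) p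
          have hC0pos : (0:ℝ) < 2 ^ (σ + (d:ℝ)) * (K:ℝ) ^ (d:ℝ) := by
            have : (0:ℝ) < (K:ℝ) := by exact_mod_cast (show 0 < K by omega)
            positivity
          have hki' : ((nsup (j - m) : ℝ)) ^ (σ + (d:ℝ))
              ≤ (2 ^ (σ + (d:ℝ)) * (K:ℝ) ^ (d:ℝ)) * Dq j := by
            simpa only [hD, hQ] using hki
          rw [div_le_iff₀ hDp, h2split]
          have h1le : (1:ℝ) ≤ (2 ^ (σ + (d:ℝ)) * (K:ℝ) ^ (d:ℝ) * Dq j) *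
              ((((nsup (j - m) : ℝ)) ^ (σ + (d:ℝ)))⁻¹) := by
            rw [← div_eq_mul_inv, le_div_iff₀ hX, one_mul]
            calc ((nsup (j - m) : ℝ)) ^ (σ + (d:ℝ))
                ≤ (2 ^ (σ + (d:ℝ)) * (K:ℝ) ^ (d:ℝ)) * Dq j := hki'
            _ = 2 ^ (σ + (d:ℝ)) * (K:ℝ) ^ (d:ℝ) * Dq j := by ring
          have h2p0 : (0:ℝ) ≤ 2^p * ‖u j - u m‖ ^ p := by
            have : (0:ℝ) ≤ (2:ℝ)^p := Real.rpow_nonneg (by norm_num) p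
            exact mul_nonneg this ha
          have hmul := mul_le_mul_of_nonneg_left h1le h2p0
          rw [mul_one] at hmul
          calc 2^p * ‖u j - u m‖ ^ p ≤ _ := hmul
          _ = 2 ^ p * 2 ^ (σ + (d:ℝ)) * (K:ℝ) ^ (d:ℝ) *
              (‖u j - u m‖ ^ p / ((nsup (j - m) : ℝ)) ^ (σ + (d:ℝ))) * Dq j := by
            rw [div_eq_mul_inv]
            ring
    _ = (2 ^ (p + (σ + (d:ℝ))) * (K:ℝ) ^ (d:ℝ)) *
          ∑ j ∈ F, ∑ m ∈ Q j, ‖u j - u m‖ ^ p / (nsup (j - m) : ℝ) ^ (σ + (d:ℝ)) := by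
        rw [Finset.mul_sum]
        apply Finset.sum_congr rfl
        intro j _
        rw [Finset.mul_sum]
    _ ≤ (2 ^ (p + (σ + (d:ℝ))) * (K:ℝ) ^ (d:ℝ)) * R :=
        mul_le_mul_of_nonneg_left (hR F Q hQne) hconstpos.le
  -- Term 2
  have hT2 : (∑ j ∈ F, ∑ m ∈ Q j, (2^p * ‖u m‖ ^ p) / Dq j) ≤ (1/2) * S := by
    have hQeq : ∀ j ∈ F, Q j = (latB d N).filter (fun m => nsup m * K ≤ nsup j) := by
      intro j hj
      ext m
      rw [hQ]
      simp only [mem_latB, Finset.mem_filter, mem_latB]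
      constructor
      · intro h
        refine ⟨le_trans h (le_trans (Nat.div_le_self _ _) (hFj j hj).2.1), ?_⟩
        exact (Nat.le_div_iff_mul_le (by omega)).mp h
      · intro h
        exact (Nat.le_div_iff_mul_le (by omega)).mpr h.2
    have hrw : (∑ j ∈ F, ∑ m ∈ Q j, (2^p * ‖u m‖ ^ p) / Dq j)
        = ∑ m ∈ latB d N, ∑ j ∈ F,
            (if nsup m * K ≤ nsup j then (2^p * ‖u m‖ ^ p) / Dq j else 0) := by
      rw [Finset.sum_comm]
      apply Finset.sum_congr rfl
      intro j hj
      rw [hQeq j hj, Finset.sum_filter]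
    rw [hrw]
    have hzero : (∑ j ∈ F,
        (if nsup (0 : Fin d → ℤ) * K ≤ nsup j then (2^p * ‖u 0‖ ^ p) / Dq j else 0)) = 0 := by
      apply Finset.sum_eq_zero
      intro j _
      rw [hu]
      simp [Real.zero_rpow hp.ne']
    rw [← Finset.sum_erase (latB d N) hzero]
    set τ : ℝ := 2*(d:ℝ)*3^(d-1) * (1 + 1/σ) * (K:ℝ)^((d:ℝ)-σ) with hτ
    have hτ0 : 0 ≤ τ := by
      have : (0:ℝ) < (K:ℝ) := by exact_mod_cast (show 0 < K by omega)
      have hd' : (0:ℝ) < (d:ℝ) := by exact_mod_cast hd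
      positivity
    have hstep : ∀ m ∈ (latB d N).erase 0,
        (∑ j ∈ F, (if nsup m * K ≤ nsup j then (2^p * ‖u m‖ ^ p) / Dq j else 0))
        ≤ (2^p * τ) * (‖u m‖ ^ p / (nsup m : ℝ) ^ σ) := by
      intro m hm
      have hm0 : m ≠ 0 := (Finset.mem_erase.mp hm).1
      have hq1 : 1 ≤ nsup m := by
        rcases Nat.eq_zero_or_pos (nsup m) with h | h
        · exact absurd (nsup_eq_zero_iff.mp h) hm0
        · exact h
      have hB0 : (0:ℝ) ≤ 2^p * ‖u m‖ ^ p := by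
        have h1 : (0:ℝ) ≤ (2:ℝ)^p := Real.rpow_nonneg (by norm_num) p
        exact mul_nonneg h1 (Real.rpow_nonneg (norm_nonneg _) p)
      have e1 : (∑ j ∈ F, (if nsup m * K ≤ nsup j then (2^p * ‖u m‖ ^ p) / Dq j else 0))
          = (2^p * ‖u m‖ ^ p) * ∑ j ∈ F.filter (fun j => nsup m * K ≤ nsup j), (Dq j)⁻¹ := by
        rw [← Finset.sum_filter, Finset.mul_sum]
        apply Finset.sum_congr rfl
        intro j _
        rw [div_eq_mul_inv]
      rw [e1]
      have hcc := claimC d hd σ hσ K hK2 N (nsup m) hq1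
      have hFeq : F.filter (fun j => nsup m * K ≤ nsup j)
          = ((latB d N).erase 0).filter (fun j => nsup m * K ≤ nsup j) := by rw [hF]
      have hsum_le : (∑ j ∈ F.filter (fun j => nsup m * K ≤ nsup j), (Dq j)⁻¹)
          ≤ τ * (((nsup m : ℝ)) ^ σ)⁻¹ := by
        rw [hFeq]
        simpa only [hD, hQ, hτ] using hcc
      calc (2^p * ‖u m‖ ^ p) * ∑ j ∈ F.filter (fun j => nsup m * K ≤ nsup j), (Dq j)⁻¹
          ≤ (2^p * ‖u m‖ ^ p) * (τ * (((nsup m : ℝ)) ^ σ)⁻¹) :=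
            mul_le_mul_of_nonneg_left hsum_le hB0
      _ = (2^p * τ) * (‖u m‖ ^ p / (nsup m : ℝ) ^ σ) := by
            rw [div_eq_mul_inv]
            ring
    calc (∑ m ∈ (latB d N).erase 0, ∑ j ∈ F,
          (if nsup m * K ≤ nsup j then (2^p * ‖u m‖ ^ p) / Dq j else 0))
        ≤ ∑ m ∈ (latB d N).erase 0, (2^p * τ) * (‖u m‖ ^ p / (nsup m : ℝ) ^ σ) :=
          Finset.sum_le_sum hstep
    _ = (2^p * τ) * S := by
          rw [hS, hF, Finset.mul_sum]
    _ ≤ (1/2) * S := by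
          have hS0 : 0 ≤ S := by
            rw [hS]
            apply Finset.sum_nonneg
            intro j _
            apply div_nonneg (Real.rpow_nonneg (norm_nonneg _) p)
              (Real.rpow_nonneg (Nat.cast_nonneg _) σ)
          exact mul_le_mul_of_nonneg_right hKabs hS0
  -- combine
  have hcomb := step1
  rw [split] at hcomb
  linarith [hcomb, hT1, hT2]

end FH

open FH in
/-- Fractional discrete Hardy inequality on the full lattice `ℤ^d` for `sp > d`,
for functions with `u(0) = 0`. -/
theorem frac_hardy_sp_large_Z (d : ℕ) (s p : ℝ) (hs : 0 < s) (hp : 0 < p)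
    (hspd : (d : ℝ) < s * p) :
    ∃ c : ℝ, 0 ≤ c ∧ ∀ u : (Fin d → ℤ) → ℂ, u 0 = 0 →
      (∑' (j : {j : Fin d → ℤ // j ≠ 0}),
          ENNReal.ofReal (‖u j.1‖ ^ p / zsup j.1 ^ (s * p)))
        ≤ ENNReal.ofReal c *
            ∑' (j : Fin d → ℤ) (m : {m : Fin d → ℤ // m ≠ j}),
              ENNReal.ofReal
                (‖u j - u m.1‖ ^ p / zsup (j - m.1) ^ (s * p + d)) := by
  rcases Nat.eq_zero_or_pos d with hd0 | hd
  · subst hd0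
    refine ⟨1, zero_le_one, fun u hu => ?_⟩
    have hempty : IsEmpty {j : Fin 0 → ℤ // j ≠ 0} :=
      ⟨fun j => j.2 (Subsingleton.elim _ _)⟩
    rw [tsum_empty]
    exact zero_le
  · set σ := s * p with hσdef
    have hσ : (d:ℝ) < σ := hspd
    have hσ0 : (0:ℝ) < σ := lt_of_le_of_lt (Nat.cast_nonneg d) hσ
    have hdR : (0:ℝ) < (d:ℝ) := by exact_mod_cast hd
    set M : ℝ := 2^(p+1) * (2*(d:ℝ)*3^(d-1) * (1 + 1/σ)) with hM
    have hM0 : 0 < M := by positivity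
    set K : ℕ := max 2 ⌈M^((σ-(d:ℝ))⁻¹)⌉₊ with hK
    have hK2 : 2 ≤ K := le_max_left _ _
    have hKpos : (0:ℝ) < (K:ℝ) := by
      have : (0:ℕ) < K := by omega
      exact_mod_cast this
    have hsd : (0:ℝ) < σ - (d:ℝ) := by linarith
    have hKM : M ≤ (K:ℝ)^(σ-(d:ℝ)) := by
      have h1 : M^((σ-(d:ℝ))⁻¹) ≤ (K:ℝ) := by
        calc M^((σ-(d:ℝ))⁻¹) ≤ (⌈M^((σ-(d:ℝ))⁻¹)⌉₊ : ℝ) := Nat.le_ceil _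
        _ ≤ (K:ℝ) := by exact_mod_cast le_max_right 2 ⌈M^((σ-(d:ℝ))⁻¹)⌉₊
      calc M = (M^((σ-(d:ℝ))⁻¹))^(σ-(d:ℝ)) := by
            rw [← Real.rpow_mul hM0.le, inv_mul_cancel₀ hsd.ne', Real.rpow_one]
      _ ≤ (K:ℝ)^(σ-(d:ℝ)) := Real.rpow_le_rpow (Real.rpow_nonneg hM0.le _) h1 hsd.le
    have hKabs : 2^p * (2*(d:ℝ)*3^(d-1) * (1 + 1/σ) * (K:ℝ)^((d:ℝ)-σ)) ≤ 1/2 := by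
      have hA0 : (0:ℝ) < 2*(d:ℝ)*3^(d-1) * (1 + 1/σ) := by positivity
      have e : (K:ℝ)^((d:ℝ)-σ) = ((K:ℝ)^(σ-(d:ℝ)))⁻¹ := by
        rw [← Real.rpow_neg hKpos.le]
        ring_nf
      have hB0 : (0:ℝ) < (K:ℝ)^(σ-(d:ℝ)) := Real.rpow_pos_of_pos hKpos _
      have h2p : (0:ℝ) < (2:ℝ)^p := Real.rpow_pos_of_pos (by norm_num) p
      have e2 : (2:ℝ)^(p+1) = 2^p * 2 := by
        rw [Real.rpow_add (by norm_num), Real.rpow_one]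
      rw [e]
      have key : 2^p * (2*(d:ℝ)*3^(d-1) * (1 + 1/σ)) * ((K:ℝ)^(σ-(d:ℝ)))⁻¹
          ≤ 2^p * (2*(d:ℝ)*3^(d-1) * (1 + 1/σ)) / M := by
        rw [div_eq_mul_inv]
        apply mul_le_mul_of_nonneg_left _ (by positivity)
        exact inv_anti₀ hM0 hKM
      have e3 : 2^p * (2*(d:ℝ)*3^(d-1) * (1 + 1/σ)) / M = 1/2 := by
        rw [hM, e2]
        field_simp
      calc 2^p * (2*(d:ℝ)*3^(d-1) * (1 + 1/σ) * ((K:ℝ)^(σ-(d:ℝ)))⁻¹)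
          = 2^p * (2*(d:ℝ)*3^(d-1) * (1 + 1/σ)) * ((K:ℝ)^(σ-(d:ℝ)))⁻¹ := by ring
      _ ≤ 2^p * (2*(d:ℝ)*3^(d-1) * (1 + 1/σ)) / M := key
      _ = 1/2 := e3
    set c : ℝ := 2 * (2 ^ (p + (σ + (d:ℝ))) * (K:ℝ) ^ (d:ℝ)) with hc
    have hcpos : 0 < c := by positivity
    refine ⟨c, hcpos.le, fun u hu => ?_⟩
    set T := ∑' (j : Fin d → ℤ) (m : {m : Fin d → ℤ // m ≠ j}),
        ENNReal.ofReal
          (‖u j - u m.1‖ ^ p / zsup (j - m.1) ^ (σ + d)) with hT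
    by_cases hTtop : T = ⊤
    · rw [hTtop, ENNReal.mul_top (by simp [ENNReal.ofReal_eq_zero]; linarith)]
      exact le_top
    · set R := T.toReal with hRdef
      have hR0 : 0 ≤ R := ENNReal.toReal_nonneg
      have hofR : ENNReal.ofReal R = T := ENNReal.ofReal_toReal hTtop
      have hvnn : ∀ j m : Fin d → ℤ,
          0 ≤ ‖u j - u m‖ ^ p / (nsup (j - m) : ℝ) ^ (σ + (d:ℝ)) :=
        fun j m => div_nonneg (Real.rpow_nonneg (norm_nonneg _) p)
          (Real.rpow_nonneg (Nat.cast_nonneg _) _)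
      have hRprop : ∀ (F : Finset (Fin d → ℤ)) (Q : (Fin d → ℤ) → Finset (Fin d → ℤ)),
          (∀ j ∈ F, ∀ m ∈ Q j, m ≠ j) →
          ∑ j ∈ F, ∑ m ∈ Q j,
            ‖u j - u m‖ ^ p / (nsup (j - m) : ℝ) ^ (σ + (d:ℝ)) ≤ R := by
        intro F Q hne
        have hofle : ENNReal.ofReal (∑ j ∈ F, ∑ m ∈ Q j,
            ‖u j - u m‖ ^ p / (nsup (j - m) : ℝ) ^ (σ + (d:ℝ))) ≤ T := by
          rw [ENNReal.ofReal_sum_of_nonneg (fun j _ => Finset.sum_nonneg (fun m _ => hvnn j m))]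
          have hstep : ∀ j ∈ F, ENNReal.ofReal (∑ m ∈ Q j,
              ‖u j - u m‖ ^ p / (nsup (j - m) : ℝ) ^ (σ + (d:ℝ)))
              ≤ ∑' (m : {m : Fin d → ℤ // m ≠ j}),
                  ENNReal.ofReal
                    (‖u j - u m.1‖ ^ p / zsup (j - m.1) ^ (σ + d)) := by
            intro j hj
            rw [ENNReal.ofReal_sum_of_nonneg (fun m _ => hvnn j m)]
            have e := Finset.sum_subtype_of_mem
              (fun m => ENNReal.ofReal
                (‖u j - u m‖ ^ p / zsup (j - m) ^ (σ + (d:ℝ))))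
              (fun m hm => hne j hj m hm)
            calc (∑ m ∈ Q j, ENNReal.ofReal
                (‖u j - u m‖ ^ p / (nsup (j - m) : ℝ) ^ (σ + (d:ℝ))))
                = ∑ m ∈ Q j, ENNReal.ofReal
                    (‖u j - u m‖ ^ p / zsup (j - m) ^ (σ + (d:ℝ))) :=
                  Finset.sum_congr rfl (fun m _ => by rw [zsup_eq])
            _ = ∑ m' ∈ (Q j).subtype (· ≠ j), ENNReal.ofReal
                  (‖u j - u m'.1‖ ^ p / zsup (j - m'.1) ^ (σ + (d:ℝ))) := e.symm
            _ ≤ _ := ENNReal.sum_le_tsum _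
          calc (∑ j ∈ F, ENNReal.ofReal (∑ m ∈ Q j,
              ‖u j - u m‖ ^ p / (nsup (j - m) : ℝ) ^ (σ + (d:ℝ))))
              ≤ ∑ j ∈ F, ∑' (m : {m : Fin d → ℤ // m ≠ j}),
                  ENNReal.ofReal
                    (‖u j - u m.1‖ ^ p / zsup (j - m.1) ^ (σ + d)) :=
                Finset.sum_le_sum hstep
          _ ≤ T := by
                rw [hT]
                exact ENNReal.sum_le_tsum F
        rw [← hofR] at hofle
        exact (ENNReal.ofReal_le_ofReal_iff hR0).mp hofle
      -- final bound
      rw [ENNReal.tsum_eq_iSup_sum]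
      apply iSup_le
      intro Fs
      set N := Fs.sup (fun j' => nsup j'.1) with hN
      have hsub : Fs.image Subtype.val ⊆ (latB d N).erase 0 := by
        intro j hj
        rw [Finset.mem_image] at hj
        obtain ⟨j', hj', rfl⟩ := hj
        rw [Finset.mem_erase, mem_latB]
        exact ⟨j'.2, Finset.le_sup (f := fun j' => nsup j'.1) hj'⟩
      have hLnn : ∀ j : Fin d → ℤ, 0 ≤ ‖u j‖ ^ p / (nsup j : ℝ) ^ σ :=
        fun j => div_nonneg (Real.rpow_nonneg (norm_nonneg _) p)
          (Real.rpow_nonneg (Nat.cast_nonneg _) _)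
      calc (∑ j' ∈ Fs, ENNReal.ofReal (‖u j'.1‖ ^ p / zsup j'.1 ^ σ))
          = ∑ j ∈ Fs.image Subtype.val,
              ENNReal.ofReal (‖u j‖ ^ p / (nsup j : ℝ) ^ σ) := by
            rw [Finset.sum_image (fun a _ b _ h => Subtype.ext h)]
            apply Finset.sum_congr rfl
            intro j' _
            rw [zsup_eq]
      _ = ENNReal.ofReal (∑ j ∈ Fs.image Subtype.val,
            ‖u j‖ ^ p / (nsup j : ℝ) ^ σ) :=
          (ENNReal.ofReal_sum_of_nonneg (fun j _ => hLnn j)).symm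
      _ ≤ ENNReal.ofReal (∑ j ∈ (latB d N).erase 0,
            ‖u j‖ ^ p / (nsup j : ℝ) ^ σ) := by
          apply ENNReal.ofReal_le_ofReal
          exact Finset.sum_le_sum_of_subset_of_nonneg hsub (fun j _ _ => hLnn j)
      _ ≤ ENNReal.ofReal (c * R) := by
          apply ENNReal.ofReal_le_ofReal
          rw [hc]
          exact SN_le d hd p σ hp hσ K hK2 hKabs u hu R hRprop N
      _ = ENNReal.ofReal c * ENNReal.ofReal R := ENNReal.ofReal_mul hcpos.le
      _ = ENNReal.ofReal c * T := by rw [hofR]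
end

section
/- Let 0 < s, p < ∞ with sp < d, and let K ∈ ℕ satisfy 2^{sp+1}·(2^{p−1} ∨ 1)·2^{−K|sp−d|} ≤ 1. Set C(d,p,s,K) = 2^{sp+1+K(d ∧ sp)}·(2^{p−1} ∨ 1) / (1 − 2^{−d}). Then for every function u : ℤ₊^d → ℂ for which the left-hand side below is finite, one has ∑_{j ∈ ℤ₊^d \ {0}} |u(j)|^p / ‖j‖_∞^{sp} ≤ C(d,p,s,K) · ∑_{n=1}^{∞} ∑_{j ∈ A_n} ∑_{m ∈ A_{n+K}} |u(j) − u(m)|^p / 2^{(n+K)(d+sp)}. -/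
open scoped ENNReal

/-- The sup-norm `‖x‖_∞` of a point of `ℤ₊^d`, as a real number. -/
noncomputable def nsup {d : ℕ} (x : Fin d → ℕ) : ℝ := ((Finset.univ.sup x : ℕ) : ℝ)

/-- The dyadic annulus `A_n ⊆ ℤ₊^d` for `n ≥ 1`:
points `j` with `2^(n-1) ≤ ‖j‖_∞ ≤ 2^n - 1`. -/
def Ann (d n : ℕ) : Set (Fin d → ℕ) :=
  {j | 2 ^ (n - 1) ≤ Finset.univ.sup j ∧ Finset.univ.sup j < 2 ^ n}

def box (d N : ℕ) : Finset (Fin d → ℕ) := Fintype.piFinset (fun _ => Finset.range N)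

lemma mem_box {d N : ℕ} {j : Fin d → ℕ} (hN : 0 < N) :
    j ∈ box d N ↔ Finset.univ.sup j < N := by
  rw [box, Fintype.mem_piFinset, Finset.sup_lt_iff (by simpa using hN : (⊥ : ℕ) < N)]
  simp [Finset.mem_range]

lemma card_box (d N : ℕ) : (box d N).card = N ^ d := by
  simp [box, Fintype.card_piFinset]

noncomputable def annF (d n : ℕ) : Finset (Fin d → ℕ) := box d (2^n) \ box d (2^(n-1))

lemma mem_annF {d n : ℕ} {j : Fin d → ℕ} : j ∈ annF d n ↔ j ∈ Ann d n := by
  rw [annF, Finset.mem_sdiff, mem_box (Nat.two_pow_pos _),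
    mem_box (Nat.two_pow_pos _)]
  simp [Ann, not_lt, and_comm]

lemma card_annF (d n : ℕ) : (annF d n).card = 2^(n*d) - 2^((n-1)*d) := by
  rw [annF, Finset.card_sdiff_of_subset, card_box, card_box, ← pow_mul, ← pow_mul]
  intro j hj
  rw [mem_box (Nat.two_pow_pos _)] at hj ⊢
  exact hj.trans_le (Nat.pow_le_pow_right two_pos (Nat.sub_le n 1))

lemma aux_add_rpow {p : ℝ} (hp : 0 < p) {x y : ℝ} (hx : 0 ≤ x) (hy : 0 ≤ y) :
    (x + y) ^ p ≤ max ((2:ℝ)^(p-1)) 1 * (x ^ p + y ^ p) := by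
  have hxy : (0:ℝ) ≤ x^p + y^p := by positivity
  rcases le_total p 1 with h1 | h1
  · have h := NNReal.rpow_add_le_add_rpow (x.toNNReal) (y.toNNReal) hp.le h1
    have h' : (x+y)^p ≤ x^p + y^p := by
      have := (NNReal.coe_le_coe.mpr h)
      push_cast [NNReal.coe_rpow, Real.coe_toNNReal x hx, Real.coe_toNNReal y hy] at this
      simpa using this
    calc (x+y)^p ≤ x^p + y^p := h'
      _ ≤ max ((2:ℝ)^(p-1)) 1 * (x^p+y^p) := le_mul_of_one_le_left hxy (le_max_right _ _)
  · have h := NNReal.rpow_add_le_mul_rpow_add_rpow x.toNNReal y.toNNReal h1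
    have h' : (x+y)^p ≤ (2:ℝ)^(p-1) * (x^p + y^p) := by
      have := (NNReal.coe_le_coe.mpr h)
      push_cast [NNReal.coe_rpow, Real.coe_toNNReal x hx, Real.coe_toNNReal y hy] at this
      simpa using this
    calc (x+y)^p ≤ (2:ℝ)^(p-1) * (x^p+y^p) := h'
      _ ≤ max ((2:ℝ)^(p-1)) 1 * (x^p+y^p) := mul_le_mul_of_nonneg_right (le_max_left _ _) hxy

lemma card_ann_real (d n : ℕ) (hd : 0 < d) (hn : 1 ≤ n) :
    ((annF d n).card : ℝ) = (2:ℝ)^((n:ℝ)*(d:ℝ)) * (1 - (2:ℝ)^(-(d:ℝ))) := by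
  have hle : (2:ℕ)^((n-1)*d) ≤ 2^(n*d) :=
    Nat.pow_le_pow_right two_pos (Nat.mul_le_mul_right d (Nat.sub_le n 1))
  rw [card_annF, Nat.cast_sub hle]
  push_cast
  rw [← Real.rpow_natCast 2 (n*d), ← Real.rpow_natCast 2 ((n-1)*d)]
  have h1 : (((n-1)*d : ℕ) : ℝ) = (n:ℝ)*(d:ℝ) + (-(d:ℝ)) := by
    push_cast [Nat.cast_sub hn]
    ring
  rw [h1, Real.rpow_add two_pos, Nat.cast_mul]
  ring


lemma tsum_ann {d : ℕ} (n : ℕ) (f : (Fin d → ℕ) → ℝ≥0∞) :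
    ∑' (j : Ann d n), f j = ∑ j ∈ annF d n, f j := by
  rw [tsum_subtype]
  rw [tsum_eq_sum (s := annF d n)
    (fun j hj => Set.indicator_of_notMem (fun h => hj (mem_annF.mpr h)) f)]
  exact Finset.sum_congr rfl fun j hj => Set.indicator_of_mem (mem_annF.mp hj) f

lemma sup_pos_of_ne {d : ℕ} {j : Fin d → ℕ} (hj : j ≠ 0) : 1 ≤ Finset.univ.sup j := by
  obtain ⟨i, hi⟩ : ∃ i, j i ≠ 0 := by
    by_contra h; push_neg at h; exact hj (funext fun i => h i)
  exact le_trans (Nat.one_le_iff_ne_zero.mpr hi) (Finset.le_sup (Finset.mem_univ i))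

lemma mem_ann_iff {d n : ℕ} {j : Fin d → ℕ} (hj : j ≠ 0) :
    j ∈ Ann d (n + 1) ↔ n = Nat.log 2 (Finset.univ.sup j) := by
  constructor
  · rintro ⟨h1, h2⟩
    exact (Nat.log_eq_of_pow_le_of_lt_pow (by simpa using h1) h2).symm
  · rintro rfl
    refine ⟨?_, Nat.lt_pow_succ_log_self one_lt_two _⟩
    simpa using Nat.pow_log_le_self 2 (Nat.one_le_iff_ne_zero.mp (sup_pos_of_ne hj))

lemma tsum_decomp {d : ℕ} (G : (Fin d → ℕ) → ℝ≥0∞) :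
    ∑' (j : {j : Fin d → ℕ // j ≠ 0}), G j.1 = ∑' (n : ℕ), ∑' (j : Ann d (n + 1)), G j.1 := by
  have h1 : ∀ n : ℕ, ∑' (j : Ann d (n + 1)), G j.1 = ∑' j, (Ann d (n+1)).indicator G j :=
    fun n => tsum_subtype _ G
  simp_rw [h1]
  rw [ENNReal.tsum_comm]
  have h2 : ∑' (j : {j : Fin d → ℕ // j ≠ 0}), G j.1
      = ∑' j, ({j : Fin d → ℕ | j ≠ 0}).indicator G j := tsum_subtype _ G
  rw [h2]
  congr 1
  funext j
  by_cases hj : j = 0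
  · subst hj
    rw [Set.indicator_of_notMem (by simp)]
    refine (ENNReal.tsum_eq_zero.mpr fun n => ?_).symm
    apply Set.indicator_of_notMem
    intro h
    have := h.1
    simp at this
  · rw [Set.indicator_of_mem (by simpa using hj)]
    rw [tsum_eq_single (Nat.log 2 (Finset.univ.sup j)) ?_]
    · exact (Set.indicator_of_mem ((mem_ann_iff hj).mpr rfl) G).symm
    · intro n hn
      exact Set.indicator_of_notMem (fun h => hn ((mem_ann_iff hj).mp h)) G

lemma core (d K n : ℕ) (s p : ℝ) (hd : 0 < d) (hs : 0 < s) (hp : 0 < p) (hspd : s*p < d)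
    (hK : 2*((2:ℝ)^(s*p) * max ((2:ℝ)^(p-1)) 1 * (2:ℝ)^((K:ℝ)*(s*p) - (K:ℝ)*(d:ℝ))) ≤ 1)
    (u : (Fin d → ℕ) → ℂ) :
    ∑ j ∈ annF d (n+1), ‖u j‖ ^ p / nsup j ^ (s*p)
      ≤ ((2:ℝ)^(s*p+1+(K:ℝ)*(s*p)) * max ((2:ℝ)^(p-1)) 1 / (1 - (2:ℝ)^(-(d:ℝ))) / 2) *
          ∑ j ∈ annF d (n+1), ∑ m ∈ annF d (n+1+K),
            ‖u j - u m‖ ^ p / (2:ℝ)^(((n+1+K:ℕ):ℝ)*((d:ℝ)+s*p))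
        + (1/2) * ∑ m ∈ annF d (n+1+K), ‖u m‖ ^ p / nsup m ^ (s*p) := by
  set q := s * p with hqdef
  have hq : 0 < q := mul_pos hs hp
  set M := max ((2:ℝ)^(p-1)) 1 with hMdef
  have hM0 : 0 < M := lt_of_lt_of_le one_pos (le_max_right _ _)
  set b : ℕ := n + 1 + K with hbdef
  have h2 : (0:ℝ) < 2 := two_pos
  -- cardinality facts
  have hNb : ((annF d b).card : ℝ) = (2:ℝ)^((b:ℝ)*(d:ℝ)) * (1 - (2:ℝ)^(-(d:ℝ))) :=
    card_ann_real d b hd (by omega)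
  have hNa : ((annF d (n+1)).card : ℝ)
      = (2:ℝ)^(((n:ℝ)+1)*(d:ℝ)) * (1 - (2:ℝ)^(-(d:ℝ))) := by
    have := card_ann_real d (n+1) hd (by omega)
    rwa [Nat.cast_add, Nat.cast_one] at this
  have hfrac : (0:ℝ) < 1 - (2:ℝ)^(-(d:ℝ)) := by
    have : (2:ℝ)^(-(d:ℝ)) < 1 := by
      apply Real.rpow_lt_one_of_one_lt_of_neg one_lt_two
      simp [hd]
    linarith
  have hNb_pos : (0:ℝ) < ((annF d b).card : ℝ) := by
    rw [hNb]; positivity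
  -- nsup bounds
  have hnsup_lb : ∀ j ∈ annF d (n+1), (2:ℝ)^((n:ℝ)*q) ≤ nsup j ^ q := by
    intro j hj
    obtain ⟨h1, -⟩ := mem_annF.mp hj
    have hn1 : (2:ℝ)^(n:ℝ) ≤ nsup j := by
      rw [Real.rpow_natCast, nsup]
      exact_mod_cast (by simpa using h1 : 2^n ≤ Finset.univ.sup j)
    calc (2:ℝ)^((n:ℝ)*q) = ((2:ℝ)^(n:ℝ))^q := Real.rpow_mul (by norm_num) _ _
      _ ≤ nsup j ^ q := Real.rpow_le_rpow (by positivity) hn1 hq.le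
  have hnsup_posb : ∀ m ∈ annF d b, (0:ℝ) < nsup m ^ q := by
    intro m hm
    obtain ⟨h1, -⟩ := mem_annF.mp hm
    have : 0 < Finset.univ.sup m := lt_of_lt_of_le (Nat.two_pow_pos _) h1
    exact Real.rpow_pos_of_pos (Nat.cast_pos.mpr this) _
  have hnsup_ub : ∀ m ∈ annF d b, nsup m ^ q ≤ (2:ℝ)^((b:ℝ)*q) := by
    intro m hm
    obtain ⟨-, h2'⟩ := mem_annF.mp hm
    have hub : nsup m ≤ (2:ℝ)^(b:ℝ) := by
      rw [Real.rpow_natCast, nsup]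
      exact_mod_cast h2'.le
    calc nsup m ^ q ≤ ((2:ℝ)^(b:ℝ))^q := Real.rpow_le_rpow (Nat.cast_nonneg _) hub hq.le
    _ = (2:ℝ)^((b:ℝ)*q) := (Real.rpow_mul (by norm_num) _ _).symm
  -- pointwise triangle inequality with p-th powers
  have tri : ∀ j m : Fin d → ℕ,
      ‖u j‖ ^ p ≤ M * (‖u j - u m‖ ^ p + ‖u m‖ ^ p) := by
    intro j m
    have h1 : ‖u j‖ ≤ ‖u j - u m‖ + ‖u m‖ := by
      calc ‖u j‖ = ‖(u j - u m) + u m‖ := by ring_nf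
        _ ≤ _ := norm_add_le _ _
    calc ‖u j‖ ^ p
        ≤ (‖u j - u m‖ + ‖u m‖) ^ p :=
          Real.rpow_le_rpow (norm_nonneg _) h1 hp.le
      _ ≤ M * (‖u j - u m‖ ^ p + ‖u m‖ ^ p) :=
          aux_add_rpow hp (norm_nonneg _) (norm_nonneg _)
  -- averaged bound over the outer annulus
  have step2 : ∀ j : Fin d → ℕ, ‖u j‖ ^ p
      ≤ (M / ((annF d b).card : ℝ)) * ∑ m ∈ annF d b,
          (‖u j - u m‖ ^ p
            + (2:ℝ)^((b:ℝ)*q) * (‖u m‖ ^ p / nsup m ^ q)) := by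
    intro j
    have hsum : ((annF d b).card : ℝ) * ‖u j‖ ^ p
        ≤ M * ∑ m ∈ annF d b, (‖u j - u m‖ ^ p
            + (2:ℝ)^((b:ℝ)*q) * (‖u m‖ ^ p / nsup m ^ q)) := by
      calc ((annF d b).card : ℝ) * ‖u j‖ ^ p
          = ∑ _m ∈ annF d b, ‖u j‖ ^ p := by
            rw [Finset.sum_const, nsmul_eq_mul]
        _ ≤ ∑ m ∈ annF d b, M * (‖u j - u m‖ ^ p
              + (2:ℝ)^((b:ℝ)*q) * (‖u m‖ ^ p / nsup m ^ q)) := by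
            refine Finset.sum_le_sum fun m hm => ?_
            refine (tri j m).trans (mul_le_mul_of_nonneg_left (add_le_add_right ?_ _) hM0.le)
            have hg0 : (0:ℝ) ≤ ‖u m‖ ^ p / nsup m ^ q :=
              div_nonneg (Real.rpow_nonneg (norm_nonneg _) _)
                (Real.rpow_nonneg (Nat.cast_nonneg _) _)
            calc ‖u m‖ ^ p
                = (‖u m‖ ^ p / nsup m ^ q) * nsup m ^ q :=
                  (div_mul_cancel₀ _ (hnsup_posb m hm).ne').symm
              _ ≤ (‖u m‖ ^ p / nsup m ^ q) * (2:ℝ)^((b:ℝ)*q) :=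
                  mul_le_mul_of_nonneg_left (hnsup_ub m hm) hg0
              _ = (2:ℝ)^((b:ℝ)*q) * (‖u m‖ ^ p / nsup m ^ q) := mul_comm _ _
        _ = M * ∑ m ∈ annF d b, (‖u j - u m‖ ^ p
              + (2:ℝ)^((b:ℝ)*q) * (‖u m‖ ^ p / nsup m ^ q)) :=
            (Finset.mul_sum _ _ _).symm
    rw [div_mul_eq_mul_div, le_div_iff₀ hNb_pos, mul_comm]
    exact hsum
  -- abbreviations
  set Gm := ∑ m ∈ annF d b, ‖u m‖ ^ p / nsup m ^ q with hGmdef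
  set DD := ∑ j ∈ annF d (n+1), ∑ m ∈ annF d b, ‖u j - u m‖ ^ p with hDDdef
  have hGm0 : 0 ≤ Gm := Finset.sum_nonneg fun m _ =>
    div_nonneg (Real.rpow_nonneg (norm_nonneg _) _) (Real.rpow_nonneg (Nat.cast_nonneg _) _)
  have hDD0 : 0 ≤ DD := Finset.sum_nonneg fun j _ => Finset.sum_nonneg fun m _ => by positivity
  -- the main estimate
  have main : ∑ j ∈ annF d (n+1), ‖u j‖ ^ p / nsup j ^ q
      ≤ (2:ℝ)^(-((n:ℝ)*q)) * (M / ((annF d b).card : ℝ))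
          * (DD + ((annF d (n+1)).card : ℝ) * ((2:ℝ)^((b:ℝ)*q) * Gm)) := by
    have e1 : ∀ j : Fin d → ℕ, ∑ m ∈ annF d b, (‖u j - u m‖ ^ p
          + (2:ℝ)^((b:ℝ)*q) * (‖u m‖ ^ p / nsup m ^ q))
        = (∑ m ∈ annF d b, ‖u j - u m‖ ^ p) + (2:ℝ)^((b:ℝ)*q) * Gm := by
      intro j
      rw [Finset.sum_add_distrib, ← Finset.mul_sum]
    calc ∑ j ∈ annF d (n+1), ‖u j‖ ^ p / nsup j ^ q
        ≤ ∑ j ∈ annF d (n+1), (2:ℝ)^(-((n:ℝ)*q)) * ((M / ((annF d b).card : ℝ))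
            * ∑ m ∈ annF d b, (‖u j - u m‖ ^ p
              + (2:ℝ)^((b:ℝ)*q) * (‖u m‖ ^ p / nsup m ^ q))) := by
          refine Finset.sum_le_sum fun j hj => ?_
          have h1 : ‖u j‖ ^ p / nsup j ^ q
              ≤ ‖u j‖ ^ p / (2:ℝ)^((n:ℝ)*q) := by
            apply div_le_div_of_nonneg_left (Real.rpow_nonneg (norm_nonneg _) _)
              (Real.rpow_pos_of_pos two_pos _) (hnsup_lb j hj)
          have h2' : ‖u j‖ ^ p / (2:ℝ)^((n:ℝ)*q)
              = (2:ℝ)^(-((n:ℝ)*q)) * ‖u j‖ ^ p := by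
            rw [Real.rpow_neg (by norm_num), div_eq_inv_mul]
          refine (h1.trans_eq h2').trans ?_
          exact mul_le_mul_of_nonneg_left (step2 j) (by positivity)
      _ = (2:ℝ)^(-((n:ℝ)*q)) * (M / ((annF d b).card : ℝ))
          * (DD + ((annF d (n+1)).card : ℝ) * ((2:ℝ)^((b:ℝ)*q) * Gm)) := by
          simp_rw [e1]
          rw [← Finset.mul_sum, ← Finset.mul_sum, Finset.sum_add_distrib,
            Finset.sum_const, nsmul_eq_mul, hDDdef]
          ring
  -- power identities
  have hmulpow : ∀ x y : ℝ, (2:ℝ)^x * (2:ℝ)^y = (2:ℝ)^(x+y) :=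
    fun x y => (Real.rpow_add two_pos x y).symm
  have hbR : (b:ℝ) = (n:ℝ) + 1 + (K:ℝ) := by rw [hbdef]; push_cast; ring
  have key1 : (2:ℝ)^(-((n:ℝ)*q)) * (2:ℝ)^((b:ℝ)*((d:ℝ)+q))
      = (2:ℝ)^(q+1+(K:ℝ)*q) / 2 * (2:ℝ)^((b:ℝ)*(d:ℝ)) := by
    have h12 : (2:ℝ)^(q+1+(K:ℝ)*q) / 2 = (2:ℝ)^(q+(K:ℝ)*q) := by
      rw [show q+1+(K:ℝ)*q = (q+(K:ℝ)*q) + 1 by ring, Real.rpow_add two_pos, Real.rpow_one,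
        mul_div_cancel_right₀ _ (two_ne_zero)]
    rw [h12, hmulpow, hmulpow]
    congr 1
    rw [hbR]; ring
  have key2 : (2:ℝ)^(-((n:ℝ)*q)) * ((2:ℝ)^(((n:ℝ)+1)*(d:ℝ)) * (2:ℝ)^((b:ℝ)*q))
      = (2:ℝ)^(q + ((K:ℝ)*q - (K:ℝ)*(d:ℝ))) * (2:ℝ)^((b:ℝ)*(d:ℝ)) := by
    rw [hmulpow, hmulpow, hmulpow]
    congr 1
    rw [hbR]; ring
  -- scalar coefficient facts
  have hX : (0:ℝ) < (2:ℝ)^((b:ℝ)*((d:ℝ)+q)) := Real.rpow_pos_of_pos two_pos _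
  have hc0 : (2:ℝ)^(-((n:ℝ)*q)) * (M / ((annF d b).card : ℝ))
      = ((2:ℝ)^(q+1+(K:ℝ)*q) * M / (1 - (2:ℝ)^(-(d:ℝ))) / 2) / (2:ℝ)^((b:ℝ)*((d:ℝ)+q)) := by
    rw [hNb, mul_div_assoc', div_div, div_div,
      div_eq_div_iff (by positivity) (by positivity)]
    linear_combination (2*M*(1 - (2:ℝ)^(-(d:ℝ)))) * key1
  have hc2 : (2:ℝ)^(-((n:ℝ)*q)) * (M / ((annF d b).card : ℝ))
      * (((annF d (n+1)).card : ℝ) * (2:ℝ)^((b:ℝ)*q)) ≤ 1/2 := by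
    have heq : (2:ℝ)^(-((n:ℝ)*q)) * (M / ((annF d b).card : ℝ))
        * (((annF d (n+1)).card : ℝ) * (2:ℝ)^((b:ℝ)*q))
        = (2:ℝ)^q * M * (2:ℝ)^((K:ℝ)*q - (K:ℝ)*(d:ℝ)) := by
      have hsplit : (2:ℝ)^q * (2:ℝ)^((K:ℝ)*q-(K:ℝ)*(d:ℝ))
          = (2:ℝ)^(q + ((K:ℝ)*q-(K:ℝ)*(d:ℝ))) := hmulpow _ _
      rw [hNa, hNb]
      have hA : (0:ℝ) < (2:ℝ)^((b:ℝ)*(d:ℝ)) := by positivity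
      calc (2:ℝ)^(-((n:ℝ)*q)) * (M / ((2:ℝ)^((b:ℝ)*(d:ℝ)) * (1 - (2:ℝ)^(-(d:ℝ)))))
            * ((2:ℝ)^(((n:ℝ)+1)*(d:ℝ)) * (1 - (2:ℝ)^(-(d:ℝ))) * (2:ℝ)^((b:ℝ)*q))
          = M * ((2:ℝ)^(-((n:ℝ)*q)) * ((2:ℝ)^(((n:ℝ)+1)*(d:ℝ)) * (2:ℝ)^((b:ℝ)*q)))
            * (1 - (2:ℝ)^(-(d:ℝ))) / ((2:ℝ)^((b:ℝ)*(d:ℝ)) * (1 - (2:ℝ)^(-(d:ℝ)))) := by ring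
        _ = (2:ℝ)^q * M * (2:ℝ)^((K:ℝ)*q - (K:ℝ)*(d:ℝ)) := by
          rw [key2, ← hsplit, mul_div_mul_right _ _ hfrac.ne', div_eq_iff hA.ne']
          ring
    rw [heq]
    linarith [hK]
  -- conclude
  have hsum_div : ∑ j ∈ annF d (n+1), ∑ m ∈ annF d b,
      ‖u j - u m‖ ^ p / (2:ℝ)^((b:ℝ)*((d:ℝ)+q))
      = DD / (2:ℝ)^((b:ℝ)*((d:ℝ)+q)) := by
    rw [hDDdef]
    simp_rw [← Finset.sum_div]
  refine main.trans ?_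
  rw [mul_add, hsum_div]
  have t1 : (2:ℝ)^(-((n:ℝ)*q)) * (M / ((annF d b).card : ℝ)) * DD
      ≤ ((2:ℝ)^(q+1+(K:ℝ)*q) * M / (1 - (2:ℝ)^(-(d:ℝ))) / 2)
        * (DD / (2:ℝ)^((b:ℝ)*((d:ℝ)+q))) := by
    rw [hc0, div_mul_eq_mul_div, mul_div_assoc]
  have t2 : (2:ℝ)^(-((n:ℝ)*q)) * (M / ((annF d b).card : ℝ))
        * (((annF d (n+1)).card : ℝ) * ((2:ℝ)^((b:ℝ)*q) * Gm)) ≤ (1/2) * Gm := by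
    have : (2:ℝ)^(-((n:ℝ)*q)) * (M / ((annF d b).card : ℝ))
        * (((annF d (n+1)).card : ℝ) * ((2:ℝ)^((b:ℝ)*q) * Gm))
        = ((2:ℝ)^(-((n:ℝ)*q)) * (M / ((annF d b).card : ℝ))
          * (((annF d (n+1)).card : ℝ) * (2:ℝ)^((b:ℝ)*q))) * Gm := by ring
    rw [this]
    exact mul_le_mul_of_nonneg_right hc2 hGm0
  exact add_le_add t1 t2

/-- Main lemma, case `sp < d`. -/
theorem main_lemma_sp_small (d K : ℕ) (s p : ℝ) (hd : 0 < d) (hs : 0 < s) (hp : 0 < p)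
    (hspd : s * p < d)
    (hK : (2 : ℝ) ^ (s * p + 1) * max ((2 : ℝ) ^ (p - 1)) 1 *
        (2 : ℝ) ^ (-(K : ℝ) * |s * p - (d : ℝ)|) ≤ 1) :
    ∀ u : (Fin d → ℕ) → ℂ,
      (∑' (j : {j : Fin d → ℕ // j ≠ 0}),
          ENNReal.ofReal (‖u j.1‖ ^ p / nsup j.1 ^ (s * p))) ≠ ⊤ →
      (∑' (j : {j : Fin d → ℕ // j ≠ 0}),
          ENNReal.ofReal (‖u j.1‖ ^ p / nsup j.1 ^ (s * p)))
        ≤ ENNReal.ofReal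
            ((2 : ℝ) ^ (s * p + 1 + (K : ℝ) * min (d : ℝ) (s * p)) *
              max ((2 : ℝ) ^ (p - 1)) 1 / (1 - (2 : ℝ) ^ (-(d : ℝ)))) *
          ∑' (n : ℕ) (j : Ann d (n + 1)) (m : Ann d (n + 1 + K)),
            ENNReal.ofReal (‖u j.1 - u m.1‖ ^ p /
              (2 : ℝ) ^ (((n + 1 + K : ℕ) : ℝ) * ((d : ℝ) + s * p))) := by
  intro u hfin
  have hq : 0 < s * p := mul_pos hs hp
  have hM0 : (0:ℝ) < max ((2:ℝ)^(p-1)) 1 := lt_of_lt_of_le one_pos (le_max_right _ _)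
  have hfrac : (0:ℝ) < 1 - (2:ℝ)^(-(d:ℝ)) := by
    have : (2:ℝ)^(-(d:ℝ)) < 1 := by
      apply Real.rpow_lt_one_of_one_lt_of_neg one_lt_two
      simp [hd]
    linarith
  have hmin : min (d:ℝ) (s*p) = s*p := min_eq_right hspd.le
  rw [hmin]
  -- the constant
  set C : ℝ := (2:ℝ)^(s*p+1+(K:ℝ)*(s*p)) * max ((2:ℝ)^(p-1)) 1 / (1 - (2:ℝ)^(-(d:ℝ)))
    with hCdef
  have hC0 : 0 ≤ C := by
    rw [hCdef]
    exact div_nonneg (mul_nonneg (Real.rpow_nonneg (by norm_num) _) hM0.le) hfrac.le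
  -- hK in the form used by `core`
  have hK' : 2*((2:ℝ)^(s*p) * max ((2:ℝ)^(p-1)) 1
      * (2:ℝ)^((K:ℝ)*(s*p) - (K:ℝ)*(d:ℝ))) ≤ 1 := by
    have habs : |s*p - (d:ℝ)| = (d:ℝ) - s*p := by
      rw [abs_of_neg (by linarith)]; ring
    have he : (2:ℝ)^((K:ℝ)*(s*p) - (K:ℝ)*(d:ℝ)) = (2:ℝ)^(-(K:ℝ)*|s*p - (d:ℝ)|) := by
      rw [habs]; congr 1; ring
    have h2e : (2:ℝ)^(s*p+1) = (2:ℝ)^(s*p)*2 := by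
      rw [Real.rpow_add two_pos, Real.rpow_one]
    rw [he]
    calc 2*((2:ℝ)^(s*p) * max ((2:ℝ)^(p-1)) 1 * (2:ℝ)^(-(K:ℝ)*|s*p - (d:ℝ)|))
        = (2:ℝ)^(s*p+1) * max ((2:ℝ)^(p-1)) 1 * (2:ℝ)^(-(K:ℝ)*|s*p - (d:ℝ)|) := by
          rw [h2e]; ring
      _ ≤ 1 := hK
  -- annulus partial sums
  set Sf : ℕ → ℝ≥0∞ := fun k =>
    ∑' (j : Ann d k), ENNReal.ofReal (‖u j.1‖ ^ p / nsup j.1 ^ (s*p)) with hSf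
  set T : ℕ → ℝ≥0∞ := fun n =>
    ∑' (j : Ann d (n+1)) (m : Ann d (n+1+K)),
      ENNReal.ofReal (‖u j.1 - u m.1‖ ^ p /
        (2:ℝ)^(((n + 1 + K : ℕ) : ℝ) * ((d:ℝ) + s*p))) with hT
  have hLdecomp : (∑' (j : {j : Fin d → ℕ // j ≠ 0}),
      ENNReal.ofReal (‖u j.1‖ ^ p / nsup j.1 ^ (s*p)))
      = ∑' (n : ℕ), Sf (n+1) :=
    tsum_decomp (fun j => ENNReal.ofReal (‖u j‖ ^ p / nsup j ^ (s*p)))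
  -- per-annulus step
  have step : ∀ n : ℕ, Sf (n+1)
      ≤ ENNReal.ofReal (C/2) * T n + ENNReal.ofReal (1/2) * Sf (n+1+K) := by
    intro n
    have hnn : ∀ j : Fin d → ℕ, 0 ≤ ‖u j‖ ^ p / nsup j ^ (s*p) :=
      fun j => div_nonneg (Real.rpow_nonneg (norm_nonneg _) _)
        (Real.rpow_nonneg (Nat.cast_nonneg _) _)
    have hS1 : Sf (n+1) = ENNReal.ofReal
        (∑ j ∈ annF d (n+1), ‖u j‖ ^ p / nsup j ^ (s*p)) := by
      rw [hSf]
      beta_reduce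
      rw [tsum_ann (n+1) (fun x => ENNReal.ofReal (‖u x‖ ^ p / nsup x ^ (s*p))),
        ENNReal.ofReal_sum_of_nonneg (fun j _ => hnn j)]
    have hS2 : Sf (n+1+K) = ENNReal.ofReal
        (∑ m ∈ annF d (n+1+K), ‖u m‖ ^ p / nsup m ^ (s*p)) := by
      rw [hSf]
      beta_reduce
      rw [tsum_ann (n+1+K) (fun x => ENNReal.ofReal (‖u x‖ ^ p / nsup x ^ (s*p))),
        ENNReal.ofReal_sum_of_nonneg (fun m _ => hnn m)]
    have hT1 : T n = ENNReal.ofReal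
        (∑ j ∈ annF d (n+1), ∑ m ∈ annF d (n+1+K),
          ‖u j - u m‖ ^ p /
            (2:ℝ)^(((n + 1 + K : ℕ) : ℝ) * ((d:ℝ) + s*p))) := by
      have hDnn : ∀ x y : Fin d → ℕ, 0 ≤ ‖u x - u y‖ ^ p /
          (2:ℝ)^(((n + 1 + K : ℕ) : ℝ) * ((d:ℝ) + s*p)) :=
        fun x y => div_nonneg (Real.rpow_nonneg (norm_nonneg _) _)
          (Real.rpow_nonneg (by norm_num) _)
      rw [hT]
      beta_reduce
      rw [tsum_ann (n+1) (fun x => ∑' (m : Ann d (n+1+K)),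
        ENNReal.ofReal (‖u x - u m.1‖ ^ p /
          (2:ℝ)^(((n + 1 + K : ℕ) : ℝ) * ((d:ℝ) + s*p))))]
      rw [ENNReal.ofReal_sum_of_nonneg (fun j _ => Finset.sum_nonneg fun m _ => hDnn j m)]
      refine Finset.sum_congr rfl fun j _ => ?_
      rw [tsum_ann (n+1+K) (fun y => ENNReal.ofReal (‖u j - u y‖ ^ p /
          (2:ℝ)^(((n + 1 + K : ℕ) : ℝ) * ((d:ℝ) + s*p)))),
        ENNReal.ofReal_sum_of_nonneg (fun m _ => hDnn j m)]
    have hBnn : (0:ℝ) ≤ ∑ j ∈ annF d (n+1), ∑ m ∈ annF d (n+1+K),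
        ‖u j - u m‖ ^ p / (2:ℝ)^(((n + 1 + K : ℕ) : ℝ) * ((d:ℝ) + s*p)) :=
      Finset.sum_nonneg fun j _ => Finset.sum_nonneg fun m _ =>
        div_nonneg (Real.rpow_nonneg (norm_nonneg _) _)
          (Real.rpow_nonneg (by norm_num) _)
    have hEnn : (0:ℝ) ≤ ∑ m ∈ annF d (n+1+K), ‖u m‖ ^ p / nsup m ^ (s*p) :=
      Finset.sum_nonneg fun m _ => hnn m
    rw [hS1, hS2, hT1]
    rw [← ENNReal.ofReal_mul (by linarith : (0:ℝ) ≤ C/2),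
      ← ENNReal.ofReal_mul (by norm_num : (0:ℝ) ≤ 1/2),
      ← ENNReal.ofReal_add (mul_nonneg (by linarith) hBnn) (mul_nonneg (by norm_num) hEnn)]
    apply ENNReal.ofReal_le_ofReal
    have hcore := core d K n s p hd hs hp hspd hK' u
    calc ∑ j ∈ annF d (n+1), ‖u j‖ ^ p / nsup j ^ (s*p)
        ≤ ((2:ℝ)^(s*p+1+(K:ℝ)*(s*p)) * max ((2:ℝ)^(p-1)) 1 / (1 - (2:ℝ)^(-(d:ℝ))) / 2) *
            ∑ j ∈ annF d (n+1), ∑ m ∈ annF d (n+1+K),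
              ‖u j - u m‖ ^ p / (2:ℝ)^(((n+1+K:ℕ):ℝ)*((d:ℝ)+s*p))
          + (1/2) * ∑ m ∈ annF d (n+1+K), ‖u m‖ ^ p / nsup m ^ (s*p) := hcore
      _ = C/2 * (∑ j ∈ annF d (n+1), ∑ m ∈ annF d (n+1+K),
              ‖u j - u m‖ ^ p / (2:ℝ)^(((n+1+K:ℕ):ℝ)*((d:ℝ)+s*p)))
          + 1/2 * ∑ m ∈ annF d (n+1+K), ‖u m‖ ^ p / nsup m ^ (s*p) := by
            rw [hCdef]
  -- sum over n
  have hsum : (∑' (j : {j : Fin d → ℕ // j ≠ 0}),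
      ENNReal.ofReal (‖u j.1‖ ^ p / nsup j.1 ^ (s*p)))
      ≤ ENNReal.ofReal (C/2) * (∑' n, T n)
        + ENNReal.ofReal (1/2) * ∑' (n : ℕ), Sf (n+1+K) := by
    rw [hLdecomp]
    calc ∑' (n : ℕ), Sf (n+1)
        ≤ ∑' (n : ℕ), (ENNReal.ofReal (C/2) * T n + ENNReal.ofReal (1/2) * Sf (n+1+K)) :=
          ENNReal.tsum_le_tsum step
      _ = _ := by
          rw [ENNReal.tsum_add, ENNReal.tsum_mul_left, ENNReal.tsum_mul_left]
  have hshift : (∑' (n : ℕ), Sf (n+1+K)) ≤ ∑' (n : ℕ), Sf (n+1) := by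
    refine Summable.tsum_le_tsum_of_inj (fun n => n + K) (add_left_injective K)
      (fun c _ => by simp) (fun n => by beta_reduce; exact le_of_eq (congrArg Sf (by omega)))
      ENNReal.summable ENNReal.summable
  rw [← hLdecomp] at hshift
  set L := ∑' (j : {j : Fin d → ℕ // j ≠ 0}),
    ENNReal.ofReal (‖u j.1‖ ^ p / nsup j.1 ^ (s*p)) with hLdef
  have hhalf : L ≤ ENNReal.ofReal (C/2) * (∑' n, T n) + ENNReal.ofReal (1/2) * L :=
    hsum.trans (add_le_add_right (mul_le_mul_right hshift _) _)
  have hLhalf_ne : ENNReal.ofReal (1/2) * L ≠ ⊤ := ENNReal.mul_ne_top ENNReal.ofReal_ne_top hfin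
  have hLsplit : L = ENNReal.ofReal (1/2) * L + ENNReal.ofReal (1/2) * L := by
    rw [← add_mul, ← ENNReal.ofReal_add (by norm_num) (by norm_num)]
    norm_num
  have h3 : ENNReal.ofReal (1/2) * L ≤ ENNReal.ofReal (C/2) * (∑' n, T n) := by
    exact (ENNReal.add_le_add_iff_right hLhalf_ne).mp
      (le_trans (le_of_eq hLsplit.symm) hhalf)
  have h4 : L ≤ 2 * (ENNReal.ofReal (C/2) * (∑' n, T n)) := by
    have h12 : (2:ℝ≥0∞) * ENNReal.ofReal (1/2) = 1 := by
      rw [show ((2:ℝ≥0∞)) = ENNReal.ofReal 2 from (ENNReal.ofReal_ofNat 2).symm,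
        ← ENNReal.ofReal_mul (by norm_num : (0:ℝ) ≤ 2)]
      norm_num
    calc L = 2 * (ENNReal.ofReal (1/2) * L) := by
          rw [← mul_assoc, h12, one_mul]
      _ ≤ 2 * (ENNReal.ofReal (C/2) * (∑' n, T n)) := mul_le_mul_right h3 2
  calc L ≤ 2 * (ENNReal.ofReal (C/2) * (∑' n, T n)) := h4
    _ = ENNReal.ofReal C * ∑' n, T n := by
        rw [← mul_assoc]
        congr 1
        rw [show ((2:ℝ≥0∞)) = ENNReal.ofReal 2 from (ENNReal.ofReal_ofNat 2).symm,
          ← ENNReal.ofReal_mul (by norm_num : (0:ℝ) ≤ 2)]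
        congr 1
        ring
end
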